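/- Let r > 0, σ > 0, μ < r, I > 0, and κ > 1 be reals, let β₁ > 1 be the positive root of (1/2)σ²β(β−1) + μβ − r = 0, and set x_R = (β₁/(β₁−1))·I and x_U = x_R/κ. Define P : (0,∞) → ℝ by P(x) = (1/2)[(κx_U − I)(x/x_U)^{β₁} − (x_R − I)(x/x_R)^{β₁}] for 0 < x < x_U, P(x) = (1/2)[κx − I − (x_R − I)(x/x_R)^{β₁}] for x_U ≤ x < x_R, and P(x) = (1/2)(κ−1)x for x ≥ x_R. Then P is continuous and strictly increasing on (0,∞), P(x) → 0 as x → 0⁺, and P(x) → ∞ as x → ∞; consequently P maps (0,∞) bijectively onto (0,∞). -/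

import Mathlib

open Set Filter Topology

set_option maxHeartbeats 1600000 in
/-- the developer's bargaining share `P = (1/2)(V_U − V_R)` in the geometric
Brownian motion specification is continuous and strictly increasing on `(0,∞)`, tends to `0`
at `0⁺` and to `∞` at `∞`, and maps `(0,∞)` bijectively onto `(0,∞)`. -/
theorem stmt_15
    (r σ μ I κ : ℝ) (hr : 0 < r) (hσ : 0 < σ) (hμ : μ < r) (hI : 0 < I) (hκ : 1 < κ)
    (β₁ : ℝ) (hβ : 1 < β₁)
    (hroot : (1 / 2) * σ ^ 2 * β₁ * (β₁ - 1) + μ * β₁ - r = 0)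
    (xR xU : ℝ) (hxR : xR = (β₁ / (β₁ - 1)) * I) (hxU : xU = xR / κ)
    (P : ℝ → ℝ)
    (hP : ∀ x : ℝ, 0 < x → P x =
      if x < xU then
        (1 / 2) * ((κ * xU - I) * (x / xU) ^ β₁ - (xR - I) * (x / xR) ^ β₁)
      else if x < xR then
        (1 / 2) * (κ * x - I - (xR - I) * (x / xR) ^ β₁)
      else (1 / 2) * (κ - 1) * x) :
    ContinuousOn P (Ioi 0) ∧ StrictMonoOn P (Ioi 0) ∧
      Tendsto P (nhdsWithin 0 (Ioi 0)) (nhds 0) ∧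
      Tendsto P atTop atTop ∧
      Set.BijOn P (Ioi 0) (Ioi 0) := by
  have hβ0 : (0:ℝ) < β₁ := by linarith
  have hβ1 : (0:ℝ) < β₁ - 1 := by linarith
  have hκ0 : (0:ℝ) < κ := by linarith
  have hxRpos : 0 < xR := by rw [hxR]; exact mul_pos (div_pos hβ0 hβ1) hI
  have hxUpos : 0 < xU := hxU ▸ div_pos hxRpos hκ0
  have hκxU : κ * xU = xR := by rw [hxU]; field_simp
  have hxUxR : xU < xR := by rw [hxU]; exact div_lt_self hxRpos hκ
  have hkey : β₁ * (xR - I) = xR := by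
    have h : xR * (β₁ - 1) = β₁ * I := by rw [hxR]; field_simp
    linear_combination h
  have hxRI : 0 < xR - I := by nlinarith
  have hxUb : 0 < xU ^ β₁ := Real.rpow_pos_of_pos hxUpos β₁
  have hxRb : 0 < xR ^ β₁ := Real.rpow_pos_of_pos hxRpos β₁
  have hltb : xU ^ β₁ < xR ^ β₁ := Real.rpow_lt_rpow hxUpos.le hxUxR hβ0
  set c : ℝ := (xR - I) / xR ^ β₁ with hc
  have hcpos : 0 < c := div_pos hxRI hxRb
  set C : ℝ := (1/2) * (xR - I) * (1 / xU ^ β₁ - 1 / xR ^ β₁) with hCdef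
  have hCpos : 0 < C := by
    apply mul_pos (by positivity)
    rw [sub_pos]
    exact one_div_lt_one_div_of_lt hxUb hltb
  set f1 : ℝ → ℝ := fun x => C * x ^ β₁ with hf1def
  set f2 : ℝ → ℝ := fun x => (1/2) * (κ * x - I - c * x ^ β₁) with hf2def
  set f3 : ℝ → ℝ := fun x => (1/2) * (κ - 1) * x with hf3def
  have hcxR : c * xR ^ β₁ = xR - I := div_mul_cancel₀ _ hxRb.ne'
  -- P agrees with f1 on (0, xU]
  have hPf1 : ∀ x : ℝ, 0 < x → x ≤ xU → P x = f1 x := by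
    intro x hx hxle
    rcases lt_or_eq_of_le hxle with h | h
    · rw [hP x hx, if_pos h, Real.div_rpow hx.le hxUpos.le, Real.div_rpow hx.le hxRpos.le,
        hκxU]
      simp only [hf1def, hCdef]
      field_simp
    · rw [hP x hx, if_neg (by simp [h]), if_pos (h ▸ hxUxR),
        Real.div_rpow hx.le hxRpos.le]
      subst h
      simp only [hf1def, hCdef]
      rw [← hκxU]
      field_simp
  -- P agrees with f2 on [xU, xR]
  have hPf2 : ∀ x : ℝ, 0 < x → xU ≤ x → x ≤ xR → P x = f2 x := by
    intro x hx h1 h2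
    rcases lt_or_eq_of_le h2 with h | h
    · rw [hP x hx, if_neg (not_lt.2 h1), if_pos h, Real.div_rpow hx.le hxRpos.le]
      simp only [hf2def, hc]
      ring
    · subst h
      rw [hP x hx, if_neg (not_lt.2 h1), if_neg (lt_irrefl _)]
      simp only [hf2def]
      rw [hcxR]
      ring
  -- P agrees with f3 on [xR, ∞)
  have hPf3 : ∀ x : ℝ, xR ≤ x → P x = f3 x := by
    intro x hx
    rw [hP x (lt_of_lt_of_le hxRpos hx), if_neg (not_lt.2 (le_trans hxUxR.le hx)),
      if_neg (not_lt.2 hx)]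
  -- strict monotonicity of the pieces
  have hm1 : ∀ u v : ℝ, 0 ≤ u → u < v → f1 u < f1 v := by
    intro u v hu huv
    exact mul_lt_mul_of_pos_left (Real.rpow_lt_rpow hu huv hβ0) hCpos
  have hc2 : ∀ x : ℝ, x ≠ 0 → ContinuousAt f2 x := by
    intro x hx
    have h1 : ContinuousAt (fun y : ℝ => y ^ β₁) x :=
      Real.continuousAt_rpow_const x β₁ (Or.inl hx)
    have h2 : ContinuousAt (fun y : ℝ => (1/2) * (κ * y - I - c * y ^ β₁)) x := by
      exact ((((continuous_const.mul continuous_id).continuousAt).sub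
        continuousAt_const).sub (h1.const_mul c)).const_mul (1/2)
    exact h2
  have hm2 : StrictMonoOn f2 (Icc xU xR) := by
    apply strictMonoOn_of_deriv_pos (convex_Icc _ _)
    · intro x hx
      have hx0 : (0:ℝ) < x := lt_of_lt_of_le hxUpos hx.1
      exact (hc2 x hx0.ne').continuousWithinAt
    · intro x hx
      rw [interior_Icc] at hx
      have hx0 : (0:ℝ) < x := lt_trans hxUpos hx.1
      have h1 : HasDerivAt (fun y : ℝ => y ^ β₁) (β₁ * x ^ (β₁ - 1)) x :=
        Real.hasDerivAt_rpow_const (Or.inl hx0.ne')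
      have h2 : HasDerivAt f2 ((1/2) * (κ * 1 - c * (β₁ * x ^ (β₁ - 1)))) x := by
        exact ((((hasDerivAt_id x).const_mul κ).sub_const I).sub
          (h1.const_mul c)).const_mul (1/2)
      rw [h2.deriv]
      have hsplit : xR ^ β₁ = xR ^ (β₁ - 1) * xR := by
        conv_lhs => rw [show β₁ = (β₁ - 1) + 1 by ring, Real.rpow_add_one hxRpos.ne']
      have hxRb1 : 0 < xR ^ (β₁ - 1) := Real.rpow_pos_of_pos hxRpos _
      have hone : c * (β₁ * xR ^ (β₁ - 1)) = 1 := by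
        rw [hc, hsplit]
        field_simp
        linear_combination hkey
      have hxp : x ^ (β₁ - 1) < xR ^ (β₁ - 1) := Real.rpow_lt_rpow hx0.le hx.2 hβ1
      have hlt2 : c * (β₁ * x ^ (β₁ - 1)) < c * (β₁ * xR ^ (β₁ - 1)) :=
        mul_lt_mul_of_pos_left (mul_lt_mul_of_pos_left hxp hβ0) hcpos
      nlinarith [hone, hlt2]
  have hm3 : ∀ u v : ℝ, u < v → f3 u < f3 v := by
    intro u v huv
    simp only [hf3def]
    nlinarith
  -- assembled monotonicity lemmas
  have L1s : ∀ u v : ℝ, 0 < u → u < v → v ≤ xU → P u < P v := by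
    intro u v hu huv hv
    rw [hPf1 u hu (le_of_lt (lt_of_lt_of_le huv hv)), hPf1 v (hu.trans huv) hv]
    exact hm1 u v hu.le huv
  have L1w : ∀ u v : ℝ, 0 < u → u ≤ v → v ≤ xU → P u ≤ P v := by
    intro u v hu huv hv
    rcases eq_or_lt_of_le huv with h | h
    · rw [h]
    · exact (L1s u v hu h hv).le
  have L2s : ∀ u v : ℝ, xU ≤ u → u < v → v ≤ xR → P u < P v := by
    intro u v hu huv hv
    have hu0 : 0 < u := lt_of_lt_of_le hxUpos hu
    rw [hPf2 u hu0 hu (le_of_lt (lt_of_lt_of_le huv hv)),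
      hPf2 v (hu0.trans huv) (hu.trans huv.le) hv]
    exact hm2 ⟨hu, le_of_lt (lt_of_lt_of_le huv hv)⟩ ⟨hu.trans huv.le, hv⟩ huv
  have L2w : ∀ u v : ℝ, xU ≤ u → u ≤ v → v ≤ xR → P u ≤ P v := by
    intro u v hu huv hv
    rcases eq_or_lt_of_le huv with h | h
    · rw [h]
    · exact (L2s u v hu h hv).le
  have L3s : ∀ u v : ℝ, xR ≤ u → u < v → P u < P v := by
    intro u v hu huv
    rw [hPf3 u hu, hPf3 v (hu.trans huv.le)]
    exact hm3 u v huv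
  have hmono : StrictMonoOn P (Ioi 0) := by
    intro u hu v hv huv
    simp only [mem_Ioi] at hu hv
    rcases le_or_gt v xU with hv1 | hv1
    · exact L1s u v hu huv hv1
    rcases le_or_gt v xR with hv2 | hv2
    · rcases le_or_gt u xU with hu1 | hu1
      · exact lt_of_le_of_lt (L1w u xU hu hu1 le_rfl) (L2s xU v le_rfl hv1 hv2)
      · exact L2s u v hu1.le huv hv2
    · rcases le_or_gt xR u with hu2 | hu2
      · exact L3s u v hu2 huv
      · have h1 : P u ≤ P xR := by
          rcases le_or_gt u xU with hu1 | hu1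
          · exact le_trans (L1w u xU hu hu1 le_rfl) (L2w xU xR le_rfl hxUxR.le le_rfl)
          · exact L2w u xR hu1.le hu2.le le_rfl
        exact lt_of_le_of_lt h1 (L3s xR v le_rfl hv2)
  -- continuity
  have hc1 : ∀ x : ℝ, x ≠ 0 → ContinuousAt f1 x := fun x hx =>
    (Real.continuousAt_rpow_const x β₁ (Or.inl hx)).const_mul C
  have hc3 : Continuous f3 := by
    simp only [hf3def]; exact continuous_const.mul continuous_id
  have hcontOn : ContinuousOn P (Ioi 0) := by
    intro x hx
    simp only [mem_Ioi] at hx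
    have key : ContinuousAt P x := by
      rcases lt_trichotomy x xU with h | h | h
      · apply (hc1 x hx.ne').congr
        filter_upwards [Ioo_mem_nhds hx h] with y hy
        exact (hPf1 y hy.1 hy.2.le).symm
      · subst h
        have hl : ContinuousWithinAt P (Iic x) x := by
          apply ((hc1 x hx.ne').continuousWithinAt).congr_of_eventuallyEq
          · filter_upwards [mem_nhdsWithin_of_mem_nhds (Ioi_mem_nhds hx),
              self_mem_nhdsWithin] with y hy1 hy2
            exact hPf1 y hy1 hy2
          · exact hPf1 x hx le_rfl
        have hr' : ContinuousWithinAt P (Ici x) x := by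
          apply ((hc2 x hx.ne').continuousWithinAt).congr_of_eventuallyEq
          · filter_upwards [mem_nhdsWithin_of_mem_nhds (Iio_mem_nhds hxUxR),
              self_mem_nhdsWithin] with y hy1 hy2
            exact hPf2 y (lt_of_lt_of_le hx hy2) hy2 hy1.le
          · exact hPf2 x hx le_rfl hxUxR.le
        have := hl.union hr'
        rwa [Iic_union_Ici, continuousWithinAt_univ] at this
      · rcases lt_trichotomy x xR with h2 | h2 | h2
        · apply (hc2 x hx.ne').congr
          filter_upwards [Ioo_mem_nhds h h2] with y hy
          exact (hPf2 y (hxUpos.trans hy.1) hy.1.le hy.2.le).symm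
        · subst h2
          have hl : ContinuousWithinAt P (Iic x) x := by
            apply ((hc2 x hx.ne').continuousWithinAt).congr_of_eventuallyEq
            · filter_upwards [mem_nhdsWithin_of_mem_nhds (Ioi_mem_nhds h),
                self_mem_nhdsWithin] with y hy1 hy2
              exact hPf2 y (hxUpos.trans hy1) hy1.le hy2
            · exact hPf2 x hx h.le le_rfl
          have hr' : ContinuousWithinAt P (Ici x) x := by
            apply (hc3.continuousAt.continuousWithinAt).congr_of_eventuallyEq
            · filter_upwards [self_mem_nhdsWithin] with y hy
              exact hPf3 y hy
            · exact hPf3 x le_rfl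
          have := hl.union hr'
          rwa [Iic_union_Ici, continuousWithinAt_univ] at this
        · apply (hc3.continuousAt).congr
          filter_upwards [Ioi_mem_nhds h2] with y hy
          exact (hPf3 y hy.le).symm
    exact key.continuousWithinAt
  -- limit at 0⁺
  have htend0 : Tendsto P (𝓝[>] (0:ℝ)) (𝓝 0) := by
    have hca : ContinuousAt f1 0 :=
      (Real.continuousAt_rpow_const 0 β₁ (Or.inr hβ0.le)).const_mul C
    have h0 : f1 0 = 0 := by
      simp only [hf1def]
      rw [Real.zero_rpow hβ0.ne', mul_zero]
    have h1 : Tendsto f1 (𝓝[>] (0:ℝ)) (𝓝 0) :=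
      (h0 ▸ hca.tendsto).mono_left nhdsWithin_le_nhds
    apply h1.congr'
    filter_upwards [mem_nhdsWithin_of_mem_nhds (Iio_mem_nhds hxUpos),
      self_mem_nhdsWithin] with y hy1 hy2
    exact (hPf1 y hy2 hy1.le).symm
  -- limit at ∞
  have htendtop : Tendsto P atTop atTop := by
    have h3 : Tendsto f3 atTop atTop := by
      rw [hf3def]
      exact Tendsto.const_mul_atTop (show (0:ℝ) < (1/2) * (κ - 1) by nlinarith) tendsto_id
    apply h3.congr'
    filter_upwards [eventually_ge_atTop xR] with y hy
    exact (hPf3 y hy).symm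
  -- bijection
  have hmaps : MapsTo P (Ioi 0) (Ioi 0) := by
    intro x hx
    simp only [mem_Ioi] at hx ⊢
    set t : ℝ := min x xU / 2 with ht
    have ht0 : 0 < t := div_pos (lt_min hx hxUpos) two_pos
    have htx : t < x := by
      calc t ≤ x / 2 := by rw [ht]; gcongr; exact min_le_left _ _
        _ < x := half_lt_self hx
    have htU : t ≤ xU := by
      calc t ≤ xU / 2 := by rw [ht]; gcongr; exact min_le_right _ _
        _ ≤ xU := (half_lt_self hxUpos).le
    have hPt : 0 < P t := by
      rw [hPf1 t ht0 htU]
      exact mul_pos hCpos (Real.rpow_pos_of_pos ht0 _)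
    exact lt_trans hPt (hmono (mem_Ioi.2 ht0) (mem_Ioi.2 hx) htx)
  have hsurj : SurjOn P (Ioi 0) (Ioi 0) := by
    intro y hy
    simp only [mem_Ioi] at hy
    obtain ⟨a, haP, ha0⟩ := ((htend0.eventually_lt_const hy).and self_mem_nhdsWithin).exists
    obtain ⟨b, hbP, hab1⟩ :=
      ((htendtop.eventually_gt_atTop y).and (eventually_ge_atTop (a + 1))).exists
    have hab : a ≤ b := by linarith
    have hcont : ContinuousOn P (Icc a b) :=
      hcontOn.mono (fun z hz => mem_Ioi.2 (lt_of_lt_of_le ha0 hz.1))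
    obtain ⟨x, hxmem, hxy⟩ := intermediate_value_Icc hab hcont ⟨haP.le, hbP.le⟩
    exact ⟨x, mem_Ioi.2 (lt_of_lt_of_le ha0 hxmem.1), hxy⟩
  exact ⟨hcontOn, hmono, htend0, htendtop, hmaps, hmono.injOn, hsurj⟩
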